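/- arXiv:2407.14109 — 5 statements merged into one kernel-verified Lean document; each statement's English description precedes it below -/
import Mathlib

section
/- Let H_Λ be the finite-volume Hamiltonian on ℓ²(Λ; ℂ²) and let P({E}) be the spectral projection onto the eigenspace of H_Λ with eigenvalue E ≠ Ω. Then for all x, y ∈ Λ, the 2×2 matrix π_y P({E}) π_x† equals ⟨e_{1,y}, P({E}) e_{1,x}⟩ times the matrix with rows (1, g√ρ(x)/(E-Ω)) and (g√ρ(y)/(E-Ω), g²√(ρ(y)ρ(x))/(E-Ω)²). -/
noncomputable section

variable (d : ℕ)

/-- The finite-volume photon–atom Hamiltonian as a matrix on `ℓ²(Λ;ℝ²)`: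
`H_Λ(φ,ψ) = (T_Λφ + g√ρ ψ, g√ρ φ + Ωψ)`. -/
def hamMat (Λ : Finset (Fin d → ℤ)) (T : (Fin d → ℤ) → (Fin d → ℤ) → ℝ)
    (ρ : (Fin d → ℤ) → ℝ) (g Ω : ℝ) :
    Matrix ({a // a ∈ Λ} × Fin 2) ({a // a ∈ Λ} × Fin 2) ℝ :=
  Matrix.of fun p q =>
    if p.2 = 0 then
      (if q.2 = 0 then T p.1 q.1
       else if p.1 = q.1 then g * Real.sqrt (ρ p.1) else 0)
    else
      (if q.2 = 0 then (if p.1 = q.1 then g * Real.sqrt (ρ p.1) else 0)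
       else if p.1 = q.1 then Ω else 0)

/-- The orthogonal projection onto the `E`-eigenspace of `H_Λ`, as an operator. -/
def eigProj (Λ : Finset (Fin d → ℤ)) (T : (Fin d → ℤ) → (Fin d → ℤ) → ℝ)
    (ρ : (Fin d → ℤ) → ℝ) (g Ω E : ℝ) :
    EuclideanSpace ℝ ({a // a ∈ Λ} × Fin 2) →L[ℝ]
      EuclideanSpace ℝ ({a // a ∈ Λ} × Fin 2) :=
  letI K := Module.End.eigenspace (Matrix.toEuclideanLin (hamMat d Λ T ρ g Ω)) E
  K.subtypeL.comp (Submodule.orthogonalProjection K)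

/-- `e_{j,x}` basis vectors. -/
def basE (Λ : Finset (Fin d → ℤ)) (j : Fin 2) (x : {a // a ∈ Λ}) :
    EuclideanSpace ℝ ({a // a ∈ Λ} × Fin 2) :=
  EuclideanSpace.single (x, j) 1

lemma inner_basE (Λ : Finset (Fin d → ℤ)) (j : Fin 2) (x : {a // a ∈ Λ})
    (w : EuclideanSpace ℝ ({a // a ∈ Λ} × Fin 2)) :
    inner (𝕜 := ℝ) (basE d Λ j x) w = w (x, j) := by
  simp [basE, EuclideanSpace.inner_single_left]

lemma eigProj_mem (Λ : Finset (Fin d → ℤ)) (T : (Fin d → ℤ) → (Fin d → ℤ) → ℝ)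
    (ρ : (Fin d → ℤ) → ℝ) (g Ω E : ℝ) (u : EuclideanSpace ℝ ({a // a ∈ Λ} × Fin 2)) :
    eigProj d Λ T ρ g Ω E u ∈
      Module.End.eigenspace (Matrix.toEuclideanLin (hamMat d Λ T ρ g Ω)) E := by
  simp only [eigProj, ContinuousLinearMap.comp_apply, Submodule.subtypeL_apply]
  exact Submodule.coe_mem _

lemma eigProj_symm (Λ : Finset (Fin d → ℤ)) (T : (Fin d → ℤ) → (Fin d → ℤ) → ℝ)
    (ρ : (Fin d → ℤ) → ℝ) (g Ω E : ℝ)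
    (u w : EuclideanSpace ℝ ({a // a ∈ Λ} × Fin 2)) :
    inner (𝕜 := ℝ) (eigProj d Λ T ρ g Ω E u) w = inner (𝕜 := ℝ) u (eigProj d Λ T ρ g Ω E w) := by
  simp only [eigProj, ContinuousLinearMap.comp_apply, Submodule.subtypeL_apply]
  exact Submodule.inner_starProjection_left_eq_right _ u w

lemma eig_comp (Λ : Finset (Fin d → ℤ)) (T : (Fin d → ℤ) → (Fin d → ℤ) → ℝ)
    (ρ : (Fin d → ℤ) → ℝ) (g Ω E : ℝ) (hE : E ≠ Ω)
    (v : EuclideanSpace ℝ ({a // a ∈ Λ} × Fin 2))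
    (hv : v ∈ Module.End.eigenspace (Matrix.toEuclideanLin (hamMat d Λ T ρ g Ω)) E)
    (z : {a // a ∈ Λ}) :
    v (z, 1) = g * Real.sqrt (ρ z) / (E - Ω) * v (z, 0) := by
  rw [Module.End.mem_eigenspace_iff] at hv
  have h : (Matrix.toEuclideanLin (hamMat d Λ T ρ g Ω) v) (z, 1) = (E • v) (z, 1) := by
    rw [hv]
  rw [Matrix.toEuclideanLin_apply] at h
  have h2 : ((hamMat d Λ T ρ g Ω).mulVec (fun p => v p)) (z, 1) = E * v (z, 1) := h
  simp [Matrix.mulVec, dotProduct, hamMat, Fintype.sum_prod_type, Fin.sum_univ_two,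
    ite_mul, Finset.sum_add_distrib, Finset.sum_ite_eq, Finset.mem_attach] at h2
  have hEΩ : E - Ω ≠ 0 := sub_ne_zero.mpr hE
  field_simp
  linarith

/-- the `2×2` matrix `π_y P({E}) π_x†` equals
`⟨e_{1,y}, P({E}) e_{1,x}⟩` times the matrix with rows `(1, g√ρ(x)/(E-Ω))` and
`(g√ρ(y)/(E-Ω), g²√(ρ(y)ρ(x))/(E-Ω)²)`. -/
theorem stmt9 (Λ : Finset (Fin d → ℤ)) (T : (Fin d → ℤ) → (Fin d → ℤ) → ℝ)
    (hT : ∀ a b, T a b = T b a)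
    (ρ : (Fin d → ℤ) → ℝ) (hρ : ∀ a, 0 ≤ ρ a)
    (g Ω E : ℝ) (hg : 0 < g) (hΩ : 0 < Ω) (hE : E ≠ Ω)
    (x y : {a // a ∈ Λ}) :
    let P := eigProj d Λ T ρ g Ω E
    let φ := inner (𝕜 := ℝ) (basE d Λ 0 y) (P (basE d Λ 0 x))
    inner (𝕜 := ℝ) (basE d Λ 0 y) (P (basE d Λ 1 x))
        = g * Real.sqrt (ρ x) / (E - Ω) * φ ∧
    inner (𝕜 := ℝ) (basE d Λ 1 y) (P (basE d Λ 0 x))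
        = g * Real.sqrt (ρ y) / (E - Ω) * φ ∧
    inner (𝕜 := ℝ) (basE d Λ 1 y) (P (basE d Λ 1 x))
        = g ^ 2 * Real.sqrt (ρ y * ρ x) / (E - Ω) ^ 2 * φ := by
  intro P φ
  have hmem0 := eigProj_mem d Λ T ρ g Ω E (basE d Λ 0 x)
  have hmem0y := eigProj_mem d Λ T ρ g Ω E (basE d Λ 0 y)
  have hmem1 := eigProj_mem d Λ T ρ g Ω E (basE d Λ 1 x)
  have key := eig_comp d Λ T ρ g Ω E hE
  have c2 : inner (𝕜 := ℝ) (basE d Λ 1 y) (P (basE d Λ 0 x))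
      = g * Real.sqrt (ρ y) / (E - Ω) * φ := by
    rw [inner_basE, key _ hmem0 y, ← inner_basE d Λ 0 y (P (basE d Λ 0 x))]
  have c2' : inner (𝕜 := ℝ) (basE d Λ 1 x) (P (basE d Λ 0 y))
      = g * Real.sqrt (ρ x) / (E - Ω) * inner (𝕜 := ℝ) (basE d Λ 0 x) (P (basE d Λ 0 y)) := by
    rw [inner_basE, key _ hmem0y x, ← inner_basE d Λ 0 x (P (basE d Λ 0 y))]
  have hsymm : inner (𝕜 := ℝ) (basE d Λ 0 x) (P (basE d Λ 0 y)) = φ := by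
    show _ = inner (𝕜 := ℝ) (basE d Λ 0 y) (P (basE d Λ 0 x))
    rw [← eigProj_symm, real_inner_comm]
  have c1 : inner (𝕜 := ℝ) (basE d Λ 0 y) (P (basE d Λ 1 x))
      = g * Real.sqrt (ρ x) / (E - Ω) * φ := by
    calc inner (𝕜 := ℝ) (basE d Λ 0 y) (P (basE d Λ 1 x))
        = inner (𝕜 := ℝ) (basE d Λ 1 x) (P (basE d Λ 0 y)) := by
          rw [← eigProj_symm, real_inner_comm]
      _ = g * Real.sqrt (ρ x) / (E - Ω) * φ := by rw [c2', hsymm]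
  refine ⟨c1, c2, ?_⟩
  have c3 : inner (𝕜 := ℝ) (basE d Λ 1 y) (P (basE d Λ 1 x))
      = g * Real.sqrt (ρ y) / (E - Ω) * inner (𝕜 := ℝ) (basE d Λ 0 y) (P (basE d Λ 1 x)) := by
    rw [inner_basE, key _ hmem1 y, ← inner_basE d Λ 0 y (P (basE d Λ 1 x))]
  rw [c3, c1, Real.sqrt_mul (hρ y)]
  have hEΩ : E - Ω ≠ 0 := sub_ne_zero.mpr hE
  field_simp
end
end

section
/- With φ_E(y,x) = ⟨e_{1,y}, P({E}) e_{1,x}⟩ for E ∈ σ(H_Λ), E ≠ Ω, one has Σ_{y ∈ Λ} (1 + g²ρ(y)/(E-Ω)²) |φ_E(y,x)|² = φ_E(x,x) for every x ∈ Λ. -/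
noncomputable section

variable (d : ℕ)

/-- with `φ_E(y,x) = ⟨e_{1,y}, P({E}) e_{1,x}⟩`, one has
`Σ_{y ∈ Λ} (1 + g²ρ(y)/(E-Ω)²) |φ_E(y,x)|² = φ_E(x,x)`. -/
theorem stmt10 (Λ : Finset (Fin d → ℤ)) (T : (Fin d → ℤ) → (Fin d → ℤ) → ℝ)
    (hT : ∀ a b, T a b = T b a)
    (ρ : (Fin d → ℤ) → ℝ) (hρ : ∀ a, 0 ≤ ρ a)
    (g Ω E : ℝ) (hg : 0 < g) (hΩ : 0 < Ω) (hE : E ≠ Ω)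
    (hspec : Module.End.HasEigenvalue
      (Matrix.toEuclideanLin (hamMat d Λ T ρ g Ω)) E)
    (x : {a // a ∈ Λ}) :
    let P := eigProj d Λ T ρ g Ω E
    let φ := fun y x' => inner (𝕜 := ℝ) (basE d Λ 0 y) (P (basE d Λ 0 x'))
    ∑ y : {a // a ∈ Λ}, (1 + g ^ 2 * ρ y / (E - Ω) ^ 2) * |φ y x| ^ 2
      = φ x x := by
  intro P φ
  set M := hamMat d Λ T ρ g Ω with hM
  set K := Module.End.eigenspace (Matrix.toEuclideanLin M) E with hK
  set e : EuclideanSpace ℝ ({a // a ∈ Λ} × Fin 2) := basE d Λ 0 x with he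
  set ψ : EuclideanSpace ℝ ({a // a ∈ Λ} × Fin 2) := P e with hψdef
  have hPe : ψ = (Submodule.orthogonalProjection K e : EuclideanSpace ℝ _) := rfl
  have hmem : ψ ∈ K := by rw [hPe]; exact (Submodule.orthogonalProjection K e).2
  have hEig : Matrix.toEuclideanLin M ψ = E • ψ := Module.End.mem_eigenspace_iff.mp hmem
  have hsub : E - Ω ≠ 0 := sub_ne_zero.mpr hE
  -- component identity
  have hcomp : ∀ y, ψ (y, 1) = g * Real.sqrt (ρ y) / (E - Ω) * ψ (y, 0) := by
    intro y
    have h := congrFun (congrArg WithLp.ofLp hEig) (y, 1)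
    simp only [Matrix.ofLp_toEuclideanLin_apply] at h
    rw [Matrix.mulVec] at h
    simp only [dotProduct] at h
    rw [Fintype.sum_prod_type] at h
    simp only [Fin.sum_univ_two, hM, hamMat, Matrix.of_apply] at h
    simp only [if_neg (by decide : (1 : Fin 2) ≠ 0), if_pos rfl] at h
    simp only [if_true, PiLp.smul_apply, smul_eq_mul,
      Finset.sum_add_distrib, Finset.sum_ite_eq, Finset.mem_univ, if_pos] at h
    simp only [ite_mul, zero_mul, Finset.sum_ite_eq, Finset.mem_univ, if_pos,
      WithLp.ofLp_smul, Pi.smul_apply, PiLp.smul_apply, smul_eq_mul] at h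
    field_simp
    linarith
  have hφ : ∀ y, φ y x = ψ (y, 0) := by
    intro y
    show inner ℝ (basE d Λ 0 y) ψ = _
    simp [basE, EuclideanSpace.inner_single_left]
  have hxx : φ x x = inner (𝕜 := ℝ) ψ ψ := by
    have horth : e - ψ ∈ Kᗮ := Submodule.sub_starProjection_mem_orthogonal (K := K) e
    have h0 : inner (𝕜 := ℝ) ψ (e - ψ) = 0 := (Submodule.mem_orthogonal K _).mp horth ψ hmem
    have : inner (𝕜 := ℝ) ψ e - inner (𝕜 := ℝ) ψ ψ = 0 := by
      rw [← inner_sub_right]; exact h0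
    have hsymm : φ x x = inner (𝕜 := ℝ) ψ e := real_inner_comm _ _
    linarith [hsymm, this]
  rw [hxx]
  have hinner : inner (𝕜 := ℝ) ψ ψ
      = ∑ y : {a // a ∈ Λ}, (ψ (y, 0) * ψ (y, 0) + ψ (y, 1) * ψ (y, 1)) := by
    rw [PiLp.inner_apply]
    rw [Fintype.sum_prod_type]
    simp [Fin.sum_univ_two]
    simp only [sq]
  rw [hinner]
  refine Finset.sum_congr rfl fun y _ => ?_
  rw [hφ y, sq_abs, hcomp y]
  have hs : Real.sqrt (ρ y.1) ^ 2 = ρ y.1 := Real.sq_sqrt (hρ y.1)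
  have h2 : (g * Real.sqrt (ρ y.1) / (E - Ω) * ψ (y, 0)) * (g * Real.sqrt (ρ y.1) / (E - Ω) * ψ (y, 0))
      = g ^ 2 * ρ y.1 / (E - Ω) ^ 2 * ψ (y, 0) ^ 2 := by
    generalize E - Ω = c
    calc _ = g ^ 2 * Real.sqrt (ρ y.1) ^ 2 / c ^ 2 * ψ (y, 0) ^ 2 := by ring
      _ = _ := by rw [hs]
  rw [h2]; ring
end
end

section
/- Fix x ∈ Λ and E ∉ σ(Ĥ_x) ∪ {Ω}, where Ĥ_x is obtained from H_Λ by replacing ρ(x) with a value ρ̂_x. If E ∈ σ(H_Λ) with eigenprojection matrix elements φ_E(·,x), then for all y ∈ Λ: φ_E(y,x) = ((g²ρ̂_x - g²ρ(x))/(E-Ω)) · Ĝ(y,x,E) · φ_E(x,x), where Ĝ(y,x,E) = ⟨δ_y, (K̂_x(E) - E)^{-1} δ_x⟩ and K̂_x(E) = T_Λ + (g²/(E-Ω))ρ + ((g²ρ̂_x - g²ρ(x))/(E-Ω)) |δ_x⟩⟨δ_x|. -/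
noncomputable section

variable (d : ℕ)

/-- The rank-one modification `K̂_x(E)` of the reduced operator
`K_Λ(E) = T_Λ + (g²/(E-Ω))ρ`, in which `ρ(x)` is replaced by `ρ̂`. -/
def KhatMat (Λ : Finset (Fin d → ℤ)) (T : (Fin d → ℤ) → (Fin d → ℤ) → ℝ)
    (ρ : (Fin d → ℤ) → ℝ) (g Ω : ℝ) (x : {a // a ∈ Λ}) (ρhat E : ℝ) :
    Matrix {a // a ∈ Λ} {a // a ∈ Λ} ℝ :=
  Matrix.of fun a b =>
    T a b + if a = b then g ^ 2 / (E - Ω) * (if a = x then ρhat else ρ a) else 0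

/-- The modified Green's function `Ĝ(y,x,E) = ⟨δ_y, (K̂_x(E) - E)^{-1} δ_x⟩`. -/
def Ghat (Λ : Finset (Fin d → ℤ)) (T : (Fin d → ℤ) → (Fin d → ℤ) → ℝ)
    (ρ : (Fin d → ℤ) → ℝ) (g Ω : ℝ) (x : {a // a ∈ Λ}) (ρhat E : ℝ)
    (y x' : {a // a ∈ Λ}) : ℝ :=
  (KhatMat d Λ T ρ g Ω x ρhat E - E • (1 : Matrix {a // a ∈ Λ} {a // a ∈ Λ} ℝ))⁻¹ y x'

open Matrix

/-- the rank-one (Krein) formula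
`φ_E(y,x) = ((g²ρ̂_x - g²ρ(x))/(E-Ω)) Ĝ(y,x,E) φ_E(x,x)` for eigenvalues `E` of `H_Λ`
with `E ∉ σ(K̂_x(E)) ∪ {Ω}`. -/
theorem stmt14 (Λ : Finset (Fin d → ℤ)) (T : (Fin d → ℤ) → (Fin d → ℤ) → ℝ)
    (hT : ∀ a b, T a b = T b a)
    (ρ : (Fin d → ℤ) → ℝ) (hρ : ∀ a, 0 ≤ ρ a)
    (g Ω E : ℝ) (hg : 0 < g) (hΩ : 0 < Ω) (hE : E ≠ Ω)
    (x : {a // a ∈ Λ}) (ρhat : ℝ)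
    (hinv : IsUnit (KhatMat d Λ T ρ g Ω x ρhat E
      - E • (1 : Matrix {a // a ∈ Λ} {a // a ∈ Λ} ℝ)))
    (hspec : Module.End.HasEigenvalue
      (Matrix.toEuclideanLin (hamMat d Λ T ρ g Ω)) E) :
    let φ := fun y x' => inner (𝕜 := ℝ) (basE d Λ 0 y)
      (eigProj d Λ T ρ g Ω E (basE d Λ 0 x'))
    ∀ y : {a // a ∈ Λ},
      φ y x = (g ^ 2 * ρhat - g ^ 2 * ρ x) / (E - Ω)
        * Ghat d Λ T ρ g Ω x ρhat E y x * φ x x := by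
  intro φ y
  have hEΩ : E - Ω ≠ 0 := sub_ne_zero.mpr hE
  set M : Matrix {a // a ∈ Λ} {a // a ∈ Λ} ℝ :=
    KhatMat d Λ T ρ g Ω x ρhat E - E • (1 : Matrix {a // a ∈ Λ} {a // a ∈ Λ} ℝ) with hMdef
  set ψ : EuclideanSpace ℝ ({a // a ∈ Λ} × Fin 2) :=
    eigProj d Λ T ρ g Ω E (basE d Λ 0 x) with hψdef
  -- ψ is in the eigenspace
  have hmem : ψ ∈ Module.End.eigenspace (Matrix.toEuclideanLin (hamMat d Λ T ρ g Ω)) E := by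
    rw [hψdef]
    exact SetLike.coe_mem ((Submodule.orthogonalProjection (Module.End.eigenspace (Matrix.toEuclideanLin (hamMat d Λ T ρ g Ω)) E)) (basE d Λ 0 x))
  have heig := Module.End.mem_eigenspace_iff.mp hmem
  -- componentwise eigen-equation
  have heig_pt : ∀ p, ((hamMat d Λ T ρ g Ω) *ᵥ (fun q => ψ q)) p = E * ψ p := by
    intro p
    have := congrFun (congrArg (WithLp.equiv 2 (({a // a ∈ Λ} × Fin 2) → ℝ)) heig) p
    simpa [Matrix.toEuclideanLin_apply] using this
  set u : {a // a ∈ Λ} → ℝ := fun a => ψ (a, 0) with hu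
  set v : {a // a ∈ Λ} → ℝ := fun a => ψ (a, 1) with hv
  -- the two coupled equations
  have row0 : ∀ a, (∑ b, T a.1 b.1 * u b) + g * Real.sqrt (ρ a.1) * v a = E * u a := by
    intro a
    have h : (∑ b, (T a.1 b.1 * ψ (b, 0) + if a = b then g * Real.sqrt (ρ a.1) * ψ (b, 1) else 0))
        = E * ψ (a, 0) := by
      have := heig_pt (a, 0)
      simp only [Matrix.mulVec, dotProduct, Fintype.sum_prod_type, Fin.sum_univ_two,
        hamMat, Matrix.of_apply] at this
      simpa using this
    rw [Finset.sum_add_distrib, Finset.sum_ite_eq] at h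
    simpa using h
  have row1 : ∀ a, g * Real.sqrt (ρ a.1) * u a + Ω * v a = E * v a := by
    intro a
    have h : (∑ b, ((if a = b then g * Real.sqrt (ρ a.1) * ψ (b, 0) else 0)
        + if a = b then Ω * ψ (b, 1) else 0)) = E * ψ (a, 1) := by
      have := heig_pt (a, 1)
      simp only [Matrix.mulVec, dotProduct, Fintype.sum_prod_type, Fin.sum_univ_two,
        hamMat, Matrix.of_apply] at this
      simpa using this
    rw [Finset.sum_add_distrib, Finset.sum_ite_eq, Finset.sum_ite_eq] at h
    simpa using h
  have hvfm : ∀ a, v a = g * Real.sqrt (ρ a.1) * u a / (E - Ω) := by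
    intro a
    have h := row1 a
    field_simp
    linarith [h]
  -- compute (K̂ - E) u
  have hkey : M *ᵥ u = fun a =>
      if a = x then (g ^ 2 * ρhat - g ^ 2 * ρ x.1) / (E - Ω) * u x else 0 := by
    funext a
    have h0 := row0 a
    have hsum : (∑ b, T a.1 b.1 * u b) = E * u a - g ^ 2 * ρ a.1 / (E - Ω) * u a := by
      rw [hvfm a] at h0
      have hs : Real.sqrt (ρ a.1) * Real.sqrt (ρ a.1) = ρ a.1 := Real.mul_self_sqrt (hρ a.1)
      have heq : g * Real.sqrt (ρ a.1) * (g * Real.sqrt (ρ a.1) * u a / (E - Ω))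
          = g ^ 2 * ρ a.1 / (E - Ω) * u a := by
        field_simp
        ring_nf
        rw [Real.sq_sqrt (hρ a.1)]
        ring
      rw [heq] at h0
      linarith
    simp only [hMdef, Matrix.mulVec, dotProduct, Matrix.sub_apply, Matrix.smul_apply,
      Matrix.one_apply, KhatMat, Matrix.of_apply, smul_eq_mul]
    have hstep1 : ∀ b ∈ Finset.univ, (T a.1 b.1 + (if a = b then g ^ 2 / (E - Ω) * (if a = x then ρhat else ρ a.1) else 0)
        - E * (if a = b then 1 else 0)) * u b
      = T a.1 b.1 * u b + ((if a = b then g ^ 2 / (E - Ω) * (if a = x then ρhat else ρ a.1) else 0)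
        - E * (if a = b then 1 else 0)) * u b := fun b _ => by ring_nf
    rw [Finset.sum_congr rfl hstep1]
    rw [Finset.sum_add_distrib, hsum]
    have hstep2 : ∀ b ∈ Finset.univ, ((if a = b then g ^ 2 / (E - Ω) * (if a = x then ρhat else ρ a.1) else 0)
          - E * (if a = b then 1 else 0)) * u b
        = if a = b then (g ^ 2 / (E - Ω) * (if a = x then ρhat else ρ a.1) - E) * u b else 0 := by
      intro b _
      by_cases h : a = b <;> simp [h]
    have : (∑ b, ((if a = b then g ^ 2 / (E - Ω) * (if a = x then ρhat else ρ a.1) else 0)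
        - E * (if a = b then 1 else 0)) * u b)
        = (g ^ 2 / (E - Ω) * (if a = x then ρhat else ρ a.1) - E) * u a := by
      rw [Finset.sum_congr rfl hstep2]
      simp [Finset.sum_ite_eq]
    rw [this]
    by_cases h : a = x
    · subst h
      simp only [if_pos rfl, eq_self_iff_true, if_true]
      field_simp
      ring
    · simp only [if_neg h]
      field_simp
      ring
  -- invert
  have hdet : IsUnit M.det := (Matrix.isUnit_iff_isUnit_det M).mp hinv
  have hinvmul : M⁻¹ * M = 1 := Matrix.nonsing_inv_mul M hdet
  have huy : u = M⁻¹ *ᵥ (M *ᵥ u) := by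
    rw [Matrix.mulVec_mulVec, hinvmul, Matrix.one_mulVec]
  have hfinal : u y = (g ^ 2 * ρhat - g ^ 2 * ρ x.1) / (E - Ω) * M⁻¹ y x * u x := by
    conv_lhs => rw [huy]
    rw [hkey]
    simp only [Matrix.mulVec, dotProduct, mul_ite, mul_zero]
    rw [Finset.sum_ite_eq' Finset.univ x]
    simp only [Finset.mem_univ, if_true]
    ring
  -- translate back to φ
  have hφ : ∀ z : {a // a ∈ Λ}, φ z x = u z := by
    intro z
    simp only [φ, basE, hu]
    rw [EuclideanSpace.inner_single_left]
    simp [hψdef, basE]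
  rw [hφ y, hφ x, hfinal]
  rfl
end
end

section
/- With notation as in the rank-one modification setup, a real number E ≠ Ω outside σ(K̂_x(E)) is an eigenvalue of H_Λ with φ_E(x,x) ≠ 0 if and only if Γ_x(E) = (g²ρ(x) - g²ρ̂_x)/(E - Ω), where Γ_x(E) = -⟨δ_x, (K̂_x(E) - E)^{-1} δ_x⟩^{-1}. -/
noncomputable section

variable (d : ℕ)

open Matrix in
theorem stmt15_core (Λ : Finset (Fin d → ℤ)) (T : (Fin d → ℤ) → (Fin d → ℤ) → ℝ)
    (ρ : (Fin d → ℤ) → ℝ) (hρ : ∀ a, 0 ≤ ρ a)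
    (g Ω E : ℝ) (hg : g ≠ 0) (hE : E ≠ Ω)
    (x : {a // a ∈ Λ}) (ρhat : ℝ) (hρhat : ρ x ≠ ρhat)
    (hinv : IsUnit (KhatMat d Λ T ρ g Ω x ρhat E
      - E • (1 : Matrix {a // a ∈ Λ} {a // a ∈ Λ} ℝ))) :
    (∃ v : ({a // a ∈ Λ} × Fin 2) → ℝ,
        hamMat d Λ T ρ g Ω *ᵥ v = E • v ∧ v (x, 0) ≠ 0) ↔
      -((KhatMat d Λ T ρ g Ω x ρhat E
          - E • (1 : Matrix {a // a ∈ Λ} {a // a ∈ Λ} ℝ))⁻¹ x x)⁻¹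
        = (g ^ 2 * ρ x - g ^ 2 * ρhat) / (E - Ω) := by
  classical
  set A := KhatMat d Λ T ρ g Ω x ρhat E
      - E • (1 : Matrix {a // a ∈ Λ} {a // a ∈ Λ} ℝ) with hAdef
  have hEΩ : E - Ω ≠ 0 := sub_ne_zero.mpr hE
  have hc0 : (g ^ 2 * ρ x - g ^ 2 * ρhat) / (E - Ω) ≠ 0 := by
    apply div_ne_zero _ hEΩ
    rw [← mul_sub]
    exact mul_ne_zero (pow_ne_zero 2 hg) (sub_ne_zero.mpr hρhat)
  have hdet : IsUnit A.det := (Matrix.isUnit_iff_isUnit_det A).mp hinv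
  have hIA : A⁻¹ * A = 1 := Matrix.nonsing_inv_mul A hdet
  have hAI : A * A⁻¹ = 1 := Matrix.mul_nonsing_inv A hdet
  set G : ℝ := A⁻¹ x x with hGdef
  have hrow0 : ∀ (w : ({a // a ∈ Λ} × Fin 2) → ℝ) (a : {a // a ∈ Λ}),
      (hamMat d Λ T ρ g Ω *ᵥ w) (a, 0)
        = (∑ b : {a // a ∈ Λ}, T a b * w (b, 0)) + g * Real.sqrt (ρ a) * w (a, 1) := by
    intro w a
    simp [hamMat, Matrix.mulVec, dotProduct, Fintype.sum_prod_type, Fin.sum_univ_two,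
      Finset.sum_add_distrib, Finset.sum_ite_eq, mul_comm]
  have hrow1 : ∀ (w : ({a // a ∈ Λ} × Fin 2) → ℝ) (a : {a // a ∈ Λ}),
      (hamMat d Λ T ρ g Ω *ᵥ w) (a, 1)
        = g * Real.sqrt (ρ a) * w (a, 0) + Ω * w (a, 1) := by
    intro w a
    simp [hamMat, Matrix.mulVec, dotProduct, Fintype.sum_prod_type, Fin.sum_univ_two,
      Finset.sum_add_distrib, Finset.sum_ite_eq, mul_comm]
  have hArow : ∀ (w : {a // a ∈ Λ} → ℝ) (a : {a // a ∈ Λ}),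
      (A *ᵥ w) a = (∑ b : {a // a ∈ Λ}, T a b * w b)
        + g ^ 2 / (E - Ω) * (if a = x then ρhat else ρ a) * w a - E * w a := by
    intro w a
    simp [hAdef, KhatMat, Matrix.mulVec, dotProduct, Matrix.sub_apply, Matrix.one_apply,
      Finset.sum_sub_distrib, Finset.sum_add_distrib, Finset.sum_ite_eq, add_mul, mul_assoc,
      sub_mul, mul_ite, ite_mul]
  constructor
  · rintro ⟨v, hv, hvx⟩
    set φ : {a // a ∈ Λ} → ℝ := fun a => v (a, 0) with hφdef
    have hψ : ∀ a, v (a, 1) = g * Real.sqrt (ρ a) * φ a / (E - Ω) := by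
      intro a
      have h1 := congrFun hv (a, 1)
      rw [hrow1] at h1
      have h1' : g * Real.sqrt (ρ a) * φ a + Ω * v (a, 1) = E * v (a, 1) := h1
      field_simp
      linarith [h1']
    have hAφ : A *ᵥ φ
        = (-((g ^ 2 * ρ x - g ^ 2 * ρhat) / (E - Ω) * φ x))
          • (Pi.single x (1 : ℝ) : {a // a ∈ Λ} → ℝ) := by
      funext a
      rw [hArow]
      have h0 := congrFun hv (a, 0)
      rw [hrow0] at h0
      have h0' : (∑ b : {a // a ∈ Λ}, T a b * φ b) + g * Real.sqrt (ρ a) * v (a, 1)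
          = E * φ a := h0
      rw [hψ a] at h0'
      have hsq : Real.sqrt (ρ a) * Real.sqrt (ρ a) = ρ a := Real.mul_self_sqrt (hρ a)
      rcases eq_or_ne a x with rfl | hax
      · simp only [Pi.smul_apply, Pi.single_eq_same, smul_eq_mul, eq_self_iff_true, if_true]
        linear_combination h0' - (g ^ 2 * φ a / (E - Ω)) * hsq
      · simp only [Pi.smul_apply, Pi.single_eq_of_ne hax, smul_eq_mul, if_neg hax, mul_zero]
        linear_combination h0' - (g ^ 2 * φ a / (E - Ω)) * hsq
    have hφeq : φ = A⁻¹ *ᵥ ((-((g ^ 2 * ρ x - g ^ 2 * ρhat) / (E - Ω) * φ x))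
        • (Pi.single x (1 : ℝ) : {a // a ∈ Λ} → ℝ)) := by
      rw [← hAφ, Matrix.mulVec_mulVec, hIA, Matrix.one_mulVec]
    have hφx : φ x = -((g ^ 2 * ρ x - g ^ 2 * ρhat) / (E - Ω) * φ x) * G := by
      have h := congrFun hφeq x
      rw [Matrix.mulVec_smul, Matrix.mulVec_single] at h
      simpa [hGdef, smul_eq_mul] using h
    have hvφx : φ x ≠ 0 := hvx
    have hG1 : (g ^ 2 * ρ x - g ^ 2 * ρhat) / (E - Ω) * G = -1 := by
      have h2 : φ x * (1 + (g ^ 2 * ρ x - g ^ 2 * ρhat) / (E - Ω) * G) = 0 := by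
        linear_combination hφx
      rcases mul_eq_zero.mp h2 with h | h
      · exact absurd h hvφx
      · linarith
    have hGne : G ≠ 0 := by
      intro h; rw [h, mul_zero] at hG1; norm_num at hG1
    have h3 : (-((g ^ 2 * ρ x - g ^ 2 * ρhat) / (E - Ω))) * G = 1 := by
      linear_combination -hG1
    have h4 := eq_inv_of_mul_eq_one_left h3
    linarith [h4]
  · intro h
    have hGne : G ≠ 0 := by
      intro h0
      rw [h0] at h
      simp at h
      exact hc0 h.symm
    have hG1 : (g ^ 2 * ρ x - g ^ 2 * ρhat) / (E - Ω) * G = -1 := by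
      rw [← h]
      field_simp
    set φ : {a // a ∈ Λ} → ℝ := A⁻¹ *ᵥ Pi.single x (1 : ℝ) with hφdef
    have hφx : φ x = G := by
      rw [hφdef, Matrix.mulVec_single]; simp [hGdef]
    have hAφ : A *ᵥ φ = Pi.single x (1 : ℝ) := by
      rw [hφdef, Matrix.mulVec_mulVec, hAI, Matrix.one_mulVec]
    set v : ({a // a ∈ Λ} × Fin 2) → ℝ := fun p => if p.2 = 0 then φ p.1
      else g * Real.sqrt (ρ p.1) * φ p.1 / (E - Ω) with hvdef
    have e0 : ∀ a : {a // a ∈ Λ},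
        (hamMat d Λ T ρ g Ω *ᵥ v) (a, 0) = (E • v) (a, 0) := by
      intro a
      rw [hrow0]
      have h0 := congrFun hAφ a
      rw [hArow, Pi.single_apply] at h0
      have hsq : Real.sqrt (ρ a) * Real.sqrt (ρ a) = ρ a := Real.mul_self_sqrt (hρ a)
      simp only [hvdef, Pi.smul_apply, smul_eq_mul]
      norm_num
      rcases eq_or_ne a x with rfl | hax
      · simp only [eq_self_iff_true, if_true] at h0
        simp only [Finset.univ_eq_attach] at h0 ⊢
        linear_combination h0 + (g ^ 2 * φ a / (E - Ω)) * hsq + hG1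
          + ((g ^ 2 * ρ (a : Fin d → ℤ) - g ^ 2 * ρhat) / (E - Ω)) * hφx
      · simp only [if_neg hax] at h0
        simp only [Finset.univ_eq_attach] at h0 ⊢
        linear_combination h0 + (g ^ 2 * φ a / (E - Ω)) * hsq
    have e1 : ∀ a : {a // a ∈ Λ},
        (hamMat d Λ T ρ g Ω *ᵥ v) (a, 1) = (E • v) (a, 1) := by
      intro a
      rw [hrow1]
      simp only [hvdef, Pi.smul_apply, smul_eq_mul]
      norm_num
      field_simp
      ring
    refine ⟨v, ?_, ?_⟩
    · funext p
      obtain ⟨a, j⟩ := p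
      fin_cases j
      · exact e0 a
      · exact e1 a
    · simp only [hvdef]
      simpa using fun h0 => hGne (hφx ▸ h0)

/-- Aronszajn–Krein characterization: for `E ≠ Ω` outside
`σ(K̂_x(E))`, `E` is an eigenvalue of `H_Λ` with `φ_E(x,x) ≠ 0` if and only if
`Γ_x(E) = (g²ρ(x) - g²ρ̂_x)/(E-Ω)`, where `Γ_x(E) = -⟨δ_x,(K̂_x(E)-E)^{-1}δ_x⟩⁻¹`. -/
theorem stmt15 (Λ : Finset (Fin d → ℤ)) (T : (Fin d → ℤ) → (Fin d → ℤ) → ℝ)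
    (hT : ∀ a b, T a b = T b a)
    (ρ : (Fin d → ℤ) → ℝ) (hρ : ∀ a, 0 ≤ ρ a)
    (g Ω E : ℝ) (hg : 0 < g) (hΩ : 0 < Ω) (hE : E ≠ Ω)
    (x : {a // a ∈ Λ}) (ρhat : ℝ) (hρhat : ρ x ≠ ρhat)
    (hinv : IsUnit (KhatMat d Λ T ρ g Ω x ρhat E
      - E • (1 : Matrix {a // a ∈ Λ} {a // a ∈ Λ} ℝ))) :
    let φxx := inner (𝕜 := ℝ) (basE d Λ 0 x)
      (eigProj d Λ T ρ g Ω E (basE d Λ 0 x))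
    let Γ := -(Ghat d Λ T ρ g Ω x ρhat E x x)⁻¹
    (Module.End.HasEigenvalue (Matrix.toEuclideanLin (hamMat d Λ T ρ g Ω)) E
        ∧ φxx ≠ 0) ↔
      Γ = (g ^ 2 * ρ x - g ^ 2 * ρhat) / (E - Ω) := by
  intro φxx Γ
  have hcore := stmt15_core d Λ T ρ hρ g Ω E (ne_of_gt hg) hE x ρhat hρhat hinv
  set K := Module.End.eigenspace (Matrix.toEuclideanLin (hamMat d Λ T ρ g Ω)) E with hK
  set e : EuclideanSpace ℝ ({a // a ∈ Λ} × Fin 2) := basE d Λ 0 x with he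
  have hφxx : φxx = inner (𝕜 := ℝ) e
      ((Submodule.orthogonalProjection K e : K) : EuclideanSpace ℝ ({a // a ∈ Λ} × Fin 2)) := rfl
  have hΓ : Γ = -((KhatMat d Λ T ρ g Ω x ρhat E
      - E • (1 : Matrix {a // a ∈ Λ} {a // a ∈ Λ} ℝ))⁻¹ x x)⁻¹ := rfl
  rw [hΓ, ← hcore]
  constructor
  · rintro ⟨hev, hφ⟩
    set w : EuclideanSpace ℝ ({a // a ∈ Λ} × Fin 2)
      := ((Submodule.orthogonalProjection K e : K) : EuclideanSpace ℝ ({a // a ∈ Λ} × Fin 2)) with hw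
    have hwK : w ∈ K := (Submodule.orthogonalProjection K e).2
    have hweq : Matrix.toEuclideanLin (hamMat d Λ T ρ g Ω) w = E • w :=
      Module.End.mem_eigenspace_iff.mp hwK
    refine ⟨w.ofLp, by simpa [Matrix.toEuclideanLin_apply] using congrArg WithLp.ofLp hweq, ?_⟩
    have hiw : φxx = w (x, (0 : Fin 2)) := by
      rw [hφxx, he]
      unfold basE
      rw [EuclideanSpace.inner_single_left]
      simp
    exact fun h0 => hφ (by rw [hiw]; exact h0)
  · rintro ⟨v, hv, hvx⟩
    set v' : EuclideanSpace ℝ ({a // a ∈ Λ} × Fin 2) := WithLp.toLp 2 v with hv'def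
    have hvK : v' ∈ K := Module.End.mem_eigenspace_iff.mpr
      (by simpa [Matrix.toEuclideanLin_apply, hv'def] using congrArg (WithLp.toLp 2) hv)
    have hvne : v' ≠ 0 := by
      intro h0
      exact hvx (by simpa [hv'def] using congrArg (fun u => u ((x, (0 : Fin 2)) : {a // a ∈ Λ} × Fin 2)) h0)
    refine ⟨Module.End.hasEigenvalue_of_hasEigenvector ⟨hvK, hvne⟩, ?_⟩
    have hPne : (Submodule.orthogonalProjection K e) ≠ 0 := by
      intro h0
      have h1 := Submodule.inner_orthogonalProjection_eq_of_mem_left (𝕜 := ℝ) (K := K) (⟨v', hvK⟩ : K) e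
      rw [h0] at h1
      rw [inner_zero_right] at h1
      rw [he] at h1
      unfold basE at h1
      rw [EuclideanSpace.inner_single_right] at h1
      simp at h1
      exact hvx h1.symm
    intro h0
    rw [hφxx] at h0
    rw [← Submodule.inner_orthogonalProjection_eq_of_mem_right (𝕜 := ℝ) (K := K)
      (Submodule.orthogonalProjection K e) e] at h0
    exact hPne (inner_self_eq_zero.mp h0)
end
end

section
/- At an eigenvalue E of H_Λ with φ_E(x,x) ≠ 0, the derivative identity holds: dΓ_x/dE (E) + (g²ρ(x) - g²ρ̂_x)/(E-Ω)² = Γ_x(E)² Σ_{y ∈ Λ} (1 + g²ρ(y)/(E-Ω)²) |Ĝ(y,x,E)|² = 1/φ_E(x,x). -/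
noncomputable section

variable (d : ℕ)

section Aux
attribute [local instance] Matrix.linftyOpNormedRing Matrix.linftyOpNormedAlgebra

variable {N : Type*} [Fintype N] [DecidableEq N]

theorem aux_hasDerivAt (A : Matrix N N ℝ) (D : N → ℝ) (c Ω E : ℝ) (hE : E ≠ Ω)
    (hinv : IsUnit (A + (c / (E - Ω)) • Matrix.diagonal D - E • (1 : Matrix N N ℝ)))
    (y x : N) :
    HasDerivAt
      (fun z : ℝ =>
        (A + (c / (z - Ω)) • Matrix.diagonal D - z • (1 : Matrix N N ℝ))⁻¹ y x)
      (((A + (c / (E - Ω)) • Matrix.diagonal D - E • (1 : Matrix N N ℝ))⁻¹ *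
          ((c / (E - Ω) ^ 2) • Matrix.diagonal D + 1) *
          (A + (c / (E - Ω)) • Matrix.diagonal D - E • (1 : Matrix N N ℝ))⁻¹) y x) E := by
  set F : ℝ → Matrix N N ℝ :=
    fun z => A + (c / (z - Ω)) • Matrix.diagonal D - z • (1 : Matrix N N ℝ) with hFdef
  have hF : HasDerivAt F
      ((-(c / (E - Ω)^2)) • Matrix.diagonal D - (1 : Matrix N N ℝ)) E := by
    have h1 : HasDerivAt (fun z : ℝ => c / (z - Ω)) (-(c / (E - Ω)^2)) E := by
      have h0 : HasDerivAt (fun z : ℝ => z - Ω) 1 E := (hasDerivAt_id E).sub_const Ω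
      have := (h0.inv (sub_ne_zero.mpr hE)).const_mul c
      rw [show (-(c / (E - Ω)^2)) = c * (-1 / (E - Ω) ^ 2) by ring]; exact this
    have h2 := h1.smul_const (Matrix.diagonal D)
    have h3 : HasDerivAt (fun z : ℝ => z • (1 : Matrix N N ℝ)) (1 : Matrix N N ℝ) E := by
      have h := (hasDerivAt_id E).smul_const (1 : Matrix N N ℝ); simp only [id, one_smul] at h; exact h
    have h := ((hasDerivAt_const E A).add h2).sub h3; simp only [zero_add] at h; exact h
  set F' : Matrix N N ℝ := (-(c / (E - Ω)^2)) • Matrix.diagonal D - (1 : Matrix N N ℝ)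
  have h1 : HasFDerivAt Ring.inverse
      (-ContinuousLinearMap.mulLeftRight ℝ (Matrix N N ℝ) ↑hinv.unit⁻¹ ↑hinv.unit⁻¹)
      (hinv.unit : Matrix N N ℝ) := hasFDerivAt_ringInverse hinv.unit
  rw [hinv.unit_spec] at h1
  have h2 : HasDerivAt (fun z => Ring.inverse (F z))
      (-((↑hinv.unit⁻¹ : Matrix N N ℝ) * F' * (↑hinv.unit⁻¹ : Matrix N N ℝ))) E := by
    exact h1.comp_hasDerivAt E hF
  have hFE : F E = A + (c / (E - Ω)) • Matrix.diagonal D - E • (1 : Matrix N N ℝ) := rfl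
  have hu : (↑hinv.unit⁻¹ : Matrix N N ℝ) = (F E)⁻¹ := by
    rw [Matrix.nonsing_inv_eq_ringInverse, hFE]
    conv_rhs => rw [← hinv.unit_spec]
    rw [Ring.inverse_unit]
  rw [hu] at h2
  have h3 : (fun z => (F z)⁻¹ y x) = fun z => Ring.inverse (F z) y x := by
    funext z; rw [Matrix.nonsing_inv_eq_ringInverse]
  have h4 := ((Matrix.entryLinearMap ℝ ℝ y x).toContinuousLinearMap).hasFDerivAt.comp_hasDerivAt
    E h2
  have h5 : (-((F E)⁻¹ * F' * (F E)⁻¹)) = ((F E)⁻¹ *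
      ((c / (E - Ω) ^ 2) • Matrix.diagonal D + 1) * (F E)⁻¹) := by
    have : -F' = (c / (E - Ω) ^ 2) • Matrix.diagonal D + 1 := by
      simp only [F', neg_sub, neg_smul, sub_neg_eq_add, neg_neg]; abel
    rw [← this]; noncomm_ring
  rw [show (fun z : ℝ =>
        (A + (c / (z - Ω)) • Matrix.diagonal D - z • (1 : Matrix N N ℝ))⁻¹ y x)
      = fun z => (F z)⁻¹ y x from rfl, h3]
  have := h5 ▸ h4
  exact this
end Aux

set_option maxHeartbeats 1000000 in
/-- the derivative identity
`Γ_x'(E) + (g²ρ(x) - g²ρ̂_x)/(E-Ω)² = Γ_x(E)² Σ_y (1 + g²ρ(y)/(E-Ω)²)|Ĝ(y,x,E)|²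
 = 1/φ_E(x,x)` at an eigenvalue `E` of `H_Λ` with `φ_E(x,x) ≠ 0`. -/
theorem stmt16 (Λ : Finset (Fin d → ℤ)) (T : (Fin d → ℤ) → (Fin d → ℤ) → ℝ)
    (hT : ∀ a b, T a b = T b a)
    (ρ : (Fin d → ℤ) → ℝ) (hρ : ∀ a, 0 ≤ ρ a)
    (g Ω E : ℝ) (hg : 0 < g) (hΩ : 0 < Ω) (hE : E ≠ Ω)
    (x : {a // a ∈ Λ}) (ρhat : ℝ)
    (hinv : IsUnit (KhatMat d Λ T ρ g Ω x ρhat E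
      - E • (1 : Matrix {a // a ∈ Λ} {a // a ∈ Λ} ℝ)))
    (hspec : Module.End.HasEigenvalue
      (Matrix.toEuclideanLin (hamMat d Λ T ρ g Ω)) E)
    (hφ : inner (𝕜 := ℝ) (basE d Λ 0 x)
      (eigProj d Λ T ρ g Ω E (basE d Λ 0 x)) ≠ (0 : ℝ)) :
    let φxx : ℝ := inner (𝕜 := ℝ) (basE d Λ 0 x)
      (eigProj d Λ T ρ g Ω E (basE d Λ 0 x))
    let Γ : ℝ → ℝ := fun z => -(Ghat d Λ T ρ g Ω x ρhat z x x)⁻¹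
    deriv Γ E + (g ^ 2 * ρ x - g ^ 2 * ρhat) / (E - Ω) ^ 2
        = Γ E ^ 2 * ∑ y : {a // a ∈ Λ},
            (1 + g ^ 2 * ρ y / (E - Ω) ^ 2) * |Ghat d Λ T ρ g Ω x ρhat E y x| ^ 2
      ∧ Γ E ^ 2 * ∑ y : {a // a ∈ Λ},
            (1 + g ^ 2 * ρ y / (E - Ω) ^ 2) * |Ghat d Λ T ρ g Ω x ρhat E y x| ^ 2
          = 1 / φxx := by
  classical
  intro φxx Γ
  have hEΩ : E - Ω ≠ 0 := sub_ne_zero.mpr hE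
  set A : Matrix {a // a ∈ Λ} {a // a ∈ Λ} ℝ := Matrix.of fun a b => T a.1 b.1 with hA
  set ρh : {a // a ∈ Λ} → ℝ := fun a => if a = x then ρhat else ρ a.1 with hρh
  have hKz : ∀ z : ℝ, KhatMat d Λ T ρ g Ω x ρhat z
        - z • (1 : Matrix {a // a ∈ Λ} {a // a ∈ Λ} ℝ)
      = A + (g ^ 2 / (z - Ω)) • Matrix.diagonal ρh - z • 1 := by
    intro z; ext a b
    simp only [KhatMat, Matrix.sub_apply, Matrix.add_apply, Matrix.smul_apply,
      Matrix.diagonal_apply, Matrix.one_apply, Matrix.of_apply, hA, hρh, smul_eq_mul]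
    split_ifs <;> ring
  set M : Matrix {a // a ∈ Λ} {a // a ∈ Λ} ℝ :=
    A + (g ^ 2 / (E - Ω)) • Matrix.diagonal ρh - E • 1 with hM
  have hMinv : IsUnit M := by rw [hM, ← hKz E]; exact hinv
  have hdet : IsUnit M.det := (Matrix.isUnit_iff_isUnit_det M).mp hMinv
  set v : {a // a ∈ Λ} → ℝ := fun y => M⁻¹ y x with hv
  have hGv : ∀ y, Ghat d Λ T ρ g Ω x ρhat E y x = v y := by
    intro y
    show (KhatMat d Λ T ρ g Ω x ρhat E - E • 1)⁻¹ y x = v y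
    rw [hKz E]
  have hAsymm : A.transpose = A := by
    ext a b; simp [hA, Matrix.transpose_apply, hT b.1 a.1]
  have hMsymm : M.transpose = M := by
    rw [hM]
    simp [Matrix.transpose_sub, Matrix.transpose_add, Matrix.transpose_smul,
      Matrix.diagonal_transpose, hAsymm]
  have hMisymm : ∀ a b, M⁻¹ a b = M⁻¹ b a := by
    intro a b
    conv_lhs => rw [show M⁻¹ = (M.transpose)⁻¹ by rw [hMsymm], ← Matrix.transpose_nonsing_inv]
    rfl
  set c : ℝ := g ^ 2 * (ρhat - ρ x.1) / (E - Ω) with hc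
  set H := hamMat d Λ T ρ g Ω with hH
  -- reduction of the eigen-equation
  have hred : ∀ ψ : EuclideanSpace ℝ ({a // a ∈ Λ} × Fin 2),
      Matrix.toEuclideanLin H ψ = E • ψ →
      (∀ a : {a // a ∈ Λ}, ψ (a, 1) = g * Real.sqrt (ρ a.1) * ψ (a, 0) / (E - Ω)) ∧
      (∀ y : {a // a ∈ Λ}, ψ (y, 0) = (c * ψ (x, 0)) * v y) := by
    intro ψ hψ
    have hcomp : ∀ p, (∑ q, H p q * ψ q) = E * ψ p := by
      intro p
      have h0 := congrFun (congrArg (WithLp.equiv 2 _) hψ) p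
      simpa [Matrix.ofLp_toEuclideanLin_apply, Matrix.mulVec, dotProduct]
        using h0
    have h2 : ∀ a : {a // a ∈ Λ},
        g * Real.sqrt (ρ a.1) * ψ (a, 0) + Ω * ψ (a, 1) = E * ψ (a, 1) := by
      intro a
      have h := hcomp (a, 1)
      simpa [hH, hamMat, Fintype.sum_prod_type, Fin.sum_univ_two, Finset.sum_add_distrib,
        ite_mul, Finset.sum_ite_eq] using h
    have hχ : ∀ a : {a // a ∈ Λ},
        ψ (a, 1) = g * Real.sqrt (ρ a.1) * ψ (a, 0) / (E - Ω) := by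
      intro a
      have h := h2 a
      field_simp
      linarith
    have h1 : ∀ a : {a // a ∈ Λ},
        (∑ b, T a.1 b.1 * ψ (b, 0)) + g ^ 2 * ρ a.1 / (E - Ω) * ψ (a, 0)
          = E * ψ (a, 0) := by
      intro a
      have key : (∑ b, T a.1 b.1 * ψ (b, 0)) + g * Real.sqrt (ρ a.1) * ψ (a, 1)
          = E * ψ (a, 0) := by
        have h := hcomp (a, 0)
        simpa [hH, hamMat, Fintype.sum_prod_type, Fin.sum_univ_two, Finset.sum_add_distrib,
          ite_mul, Finset.sum_ite_eq] using h
      rw [hχ a] at key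
      have hs : Real.sqrt (ρ a.1) ^ 2 = ρ a.1 := Real.sq_sqrt (hρ a.1)
      field_simp at key ⊢
      linear_combination key - g ^ 2 * ψ (a, 0) * hs
    refine ⟨hχ, ?_⟩
    have hMφ : M.mulVec (fun a => ψ (a, 0)) = Pi.single x (c * ψ (x, 0)) := by
      funext a
      have hsum : (M.mulVec (fun a => ψ (a, 0))) a
          = (∑ b, T a.1 b.1 * ψ (b, 0)) + g ^ 2 / (E - Ω) * ρh a * ψ (a, 0)
            - E * ψ (a, 0) := by
        simp [Matrix.mulVec, dotProduct, hM, Matrix.sub_apply, Matrix.add_apply,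
          Matrix.smul_apply, Matrix.diagonal_apply, Matrix.one_apply, hA, ite_mul, add_mul,
          zero_mul, Finset.sum_add_distrib, Finset.sum_sub_distrib, Finset.sum_ite_eq, sub_mul]
      rw [hsum, Pi.single_apply]
      have h1a := h1 a
      by_cases ha : a = x
      · subst ha
        simp only [if_pos rfl, hρh, hc, if_true]
        field_simp at h1a ⊢
        linarith
      · simp only [if_neg ha, hρh]
        field_simp at h1a ⊢
        linarith
    intro y
    have h := congrArg (fun u => (M⁻¹.mulVec u) y) hMφ
    simp only [Matrix.mulVec_mulVec, Matrix.nonsing_inv_mul M hdet, Matrix.one_mulVec,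
      Matrix.mulVec_single] at h
    rw [h, hv]
    simp only [Pi.smul_apply, Matrix.col_apply, MulOpposite.smul_eq_mul_unop, MulOpposite.unop_op]
    ring
  obtain ⟨ψ, hψvec⟩ := hspec.exists_hasEigenvector
  have hψeq : Matrix.toEuclideanLin H ψ = E • ψ := hψvec.apply_eq_smul
  obtain ⟨hχψ, hφvψ⟩ := hred ψ hψeq
  have hφx : ψ (x, 0) ≠ 0 := by
    intro h0
    apply hψvec.2
    have hz : ∀ p : {a // a ∈ Λ} × Fin 2, ψ p = 0 := by
      rintro ⟨a, j⟩
      have hj0 : ψ (a, 0) = 0 := by rw [hφvψ a, h0]; ring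
      have hj1 : ψ (a, 1) = 0 := by rw [hχψ a, hj0]; ring
      fin_cases j
      · exact hj0
      · exact hj1
    ext p
    exact hz p
  have hcvx : c * v x = 1 := by
    have h := hφvψ x
    have h2 : ψ (x, 0) * (c * v x) = ψ (x, 0) * 1 := by
      rw [mul_one]
      conv_rhs => rw [h]
      ring
    exact mul_left_cancel₀ hφx h2
  have hvx : v x ≠ 0 := by
    intro h; rw [h, mul_zero] at hcvx; exact zero_ne_one hcvx
  -- the defining equation for v
  have hKv : ∀ a : {a // a ∈ Λ},
      (∑ b, T a.1 b.1 * v b) + g ^ 2 * ρ a.1 / (E - Ω) * v a = E * v a := by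
    intro a
    have hMva : (M.mulVec v) a = (M * M⁻¹) a x := by
      simp [Matrix.mulVec, dotProduct, Matrix.mul_apply, hv]
    rw [Matrix.mul_nonsing_inv M hdet, Matrix.one_apply] at hMva
    have hsum : (M.mulVec v) a
        = (∑ b, T a.1 b.1 * v b) + g ^ 2 / (E - Ω) * ρh a * v a - E * v a := by
      simp [Matrix.mulVec, dotProduct, hM, Matrix.sub_apply, Matrix.add_apply,
        Matrix.smul_apply, Matrix.diagonal_apply, Matrix.one_apply, hA, ite_mul, add_mul,
        zero_mul, Finset.sum_add_distrib, Finset.sum_sub_distrib, Finset.sum_ite_eq, sub_mul]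
    rw [hsum] at hMva
    by_cases ha : a = x
    · subst ha
      rw [if_pos rfl] at hMva
      rw [hρh] at hMva
      simp only [eq_self_iff_true, if_true] at hMva
      rw [hc] at hcvx
      linear_combination hMva - hcvx
    · rw [if_neg ha] at hMva
      rw [hρh] at hMva
      simp only [if_neg ha] at hMva
      linear_combination hMva
  -- the eigenvector built from v
  set W : EuclideanSpace ℝ ({a // a ∈ Λ} × Fin 2) :=
    WithLp.toLp 2 (fun p : {a // a ∈ Λ} × Fin 2 => if p.2 = 0 then v p.1 else g * Real.sqrt (ρ p.1.1) * v p.1 / (E - Ω)) with hW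
  have hWx0 : W (x, 0) = v x := rfl
  have hWcomp : ∀ p : {a // a ∈ Λ} × Fin 2, (∑ q, H p q * W q) = E * W p := by
    rintro ⟨a, j⟩
    have hs : Real.sqrt (ρ a.1) ^ 2 = ρ a.1 := Real.sq_sqrt (hρ a.1)
    fin_cases j
    · have h := hKv a
      simp only [hH, hamMat, hW, Fintype.sum_prod_type, Fin.sum_univ_two, Matrix.of_apply]
      simp [Finset.sum_add_distrib, ite_mul, Finset.sum_ite_eq]
      simp only [Finset.univ_eq_attach] at h ⊢
      field_simp at h ⊢
      linear_combination h + g ^ 2 * v a * hs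
    · simp only [hH, hamMat, hW, Fintype.sum_prod_type, Fin.sum_univ_two, Matrix.of_apply]
      simp [Finset.sum_add_distrib, ite_mul, Finset.sum_ite_eq]
      field_simp
      ring
  have hWeq : Matrix.toEuclideanLin H W = E • W := by
    apply (WithLp.equiv 2 ({a // a ∈ Λ} × Fin 2 → ℝ)).injective
    funext p
    have h1 : (WithLp.equiv 2 _) (Matrix.toEuclideanLin H W) p
        = ∑ q, H p q * W q := by
      rw [WithLp.equiv_apply, Matrix.ofLp_toEuclideanLin_apply]
      simp [Matrix.mulVec, dotProduct]
    rw [h1, hWcomp p]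
    rfl
  have hWmem : W ∈ Module.End.eigenspace (Matrix.toEuclideanLin H) E :=
    Module.End.mem_eigenspace_iff.mpr hWeq
  have hspan : Module.End.eigenspace (Matrix.toEuclideanLin H) E
      = Submodule.span ℝ {W} := by
    apply le_antisymm
    · intro ψ' hψ'
      rw [Submodule.mem_span_singleton]
      refine ⟨c * ψ' (x, 0), ?_⟩
      obtain ⟨hχ', hφ'⟩ := hred ψ' (Module.End.mem_eigenspace_iff.mp hψ')
      ext p
      obtain ⟨a, j⟩ := p
      have hj0 : (c * ψ' (x, 0)) * W (a, 0) = ψ' (a, 0) := by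
        rw [show W (a, 0) = v a from rfl, hφ' a]
      have hj1 : (c * ψ' (x, 0)) * W (a, 1) = ψ' (a, 1) := by
        rw [show W (a, 1) = g * Real.sqrt (ρ a.1) * v a / (E - Ω) from rfl,
          hχ' a, hφ' a]
        ring
      fin_cases j
      · exact hj0
      · exact hj1
    · rw [Submodule.span_le, Set.singleton_subset_iff]
      exact hWmem
  -- value of the projection
  have hproj : eigProj d Λ T ρ g Ω E (basE d Λ 0 x)
      = ((Submodule.orthogonalProjection (Submodule.span ℝ {W}) (basE d Λ 0 x))
          : EuclideanSpace ℝ ({a // a ∈ Λ} × Fin 2)) := by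
    show ((Module.End.eigenspace (Matrix.toEuclideanLin (hamMat d Λ T ρ g Ω)) E).subtypeL.comp
        (Submodule.orthogonalProjection _)) (basE d Λ 0 x) = _
    rw [ContinuousLinearMap.comp_apply, Submodule.subtypeL_apply]
    rw [← hH, hspan]
  have hφxx : φxx = v x * v x / ‖W‖ ^ 2 := by
    show (inner (𝕜 := ℝ) (basE d Λ 0 x) (eigProj d Λ T ρ g Ω E (basE d Λ 0 x)) : ℝ) = _
    rw [hproj]
    rw [show ((Submodule.orthogonalProjection (Submodule.span ℝ {W}) (basE d Λ 0 x))
        : EuclideanSpace ℝ ({a // a ∈ Λ} × Fin 2))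
        = (Submodule.span ℝ {W}).starProjection (basE d Λ 0 x) from rfl,
      Submodule.starProjection_singleton]
    rw [real_inner_smul_right]
    rw [show basE d Λ 0 x = EuclideanSpace.single (x, 0) (1:ℝ) from rfl]
    rw [EuclideanSpace.inner_single_right, EuclideanSpace.inner_single_left]
    simp only [map_one, one_mul, conj_trivial, hWx0]
    simp only [RCLike.ofReal_real_eq_id, id]
    ring
  have hnormW : ‖W‖ ^ 2 = ∑ y : {a // a ∈ Λ}, (1 + g ^ 2 * ρ y.1 / (E - Ω) ^ 2) * v y ^ 2 := by
    rw [← real_inner_self_eq_norm_sq, PiLp.inner_apply]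
    simp only [RCLike.inner_apply, conj_trivial]
    rw [Fintype.sum_prod_type, Finset.sum_congr rfl fun a (_ : a ∈ Finset.univ) =>
      (Fin.sum_univ_two fun j => W (a, j) * W (a, j))]
    refine Finset.sum_congr rfl fun a _ => ?_
    have hs : Real.sqrt (ρ a.1) ^ 2 = ρ a.1 := Real.sq_sqrt (hρ a.1)
    rw [show W (a, 0) = v a from rfl, show W (a, 1) = g * Real.sqrt (ρ a.1) * v a / (E - Ω)
      from rfl]
    field_simp
    linear_combination g ^ 2 * v a ^ 2 * hs
  -- derivative of Γ
  have hu := aux_hasDerivAt A ρh (g ^ 2) Ω E hE (by rw [← hM]; exact hMinv) x x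
  have huE : (A + (g ^ 2 / (E - Ω)) • Matrix.diagonal ρh
      - E • (1 : Matrix {a // a ∈ Λ} {a // a ∈ Λ} ℝ))⁻¹ x x = v x := by
    rw [← hM]
  set der : ℝ := ((A + (g ^ 2 / (E - Ω)) • Matrix.diagonal ρh
      - E • (1 : Matrix {a // a ∈ Λ} {a // a ∈ Λ} ℝ))⁻¹ *
      ((g ^ 2 / (E - Ω) ^ 2) • Matrix.diagonal ρh + 1) *
      (A + (g ^ 2 / (E - Ω)) • Matrix.diagonal ρh
      - E • (1 : Matrix {a // a ∈ Λ} {a // a ∈ Λ} ℝ))⁻¹) x x with hderdef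
  have hΓfun : Γ = fun z : ℝ => -(((A + (g ^ 2 / (z - Ω)) • Matrix.diagonal ρh
      - z • (1 : Matrix {a // a ∈ Λ} {a // a ∈ Λ} ℝ))⁻¹ x x))⁻¹ := by
    funext z
    show -(Ghat d Λ T ρ g Ω x ρhat z x x)⁻¹ = _
    rw [show Ghat d Λ T ρ g Ω x ρhat z x x
      = (KhatMat d Λ T ρ g Ω x ρhat z
          - z • (1 : Matrix {a // a ∈ Λ} {a // a ∈ Λ} ℝ))⁻¹ x x from rfl, hKz z]
  have hΓder : HasDerivAt Γ (der / v x ^ 2) E := by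
    rw [hΓfun]
    have h2 := (hu.inv (by rw [huE]; exact hvx)).neg
    rw [huE] at h2
    rw [show der / v x ^ 2 = -(-der / v x ^ 2) by ring]
    exact h2
  have hΓE : Γ E = -(v x)⁻¹ := by
    show -(Ghat d Λ T ρ g Ω x ρhat E x x)⁻¹ = _
    rw [hGv x]
  have hdiag : (g ^ 2 / (E - Ω) ^ 2) • Matrix.diagonal ρh
      + (1 : Matrix {a // a ∈ Λ} {a // a ∈ Λ} ℝ)
      = Matrix.diagonal (fun w => g ^ 2 / (E - Ω) ^ 2 * ρh w + 1) := by
    ext a b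
    by_cases hab : a = b
    · subst hab; simp [Matrix.diagonal_apply, Matrix.one_apply]
    · simp [Matrix.diagonal_apply, Matrix.one_apply, hab]
  have hder : der = ∑ w : {a // a ∈ Λ}, (g ^ 2 / (E - Ω) ^ 2 * ρh w + 1) * v w ^ 2 := by
    rw [hderdef, ← hM, hdiag, Matrix.mul_apply]
    refine Finset.sum_congr rfl fun w _ => ?_
    rw [Matrix.mul_diagonal, hMisymm x w]
    simp only [hv]
    ring
  have hsum : (∑ y : {a // a ∈ Λ},
        (1 + g ^ 2 * ρ y.1 / (E - Ω) ^ 2) * |Ghat d Λ T ρ g Ω x ρhat E y x| ^ 2)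
      = ∑ y : {a // a ∈ Λ}, (1 + g ^ 2 * ρ y.1 / (E - Ω) ^ 2) * v y ^ 2 :=
    Finset.sum_congr rfl fun y _ => by rw [hGv y, sq_abs]
  have hsplit : (∑ w : {a // a ∈ Λ}, (g ^ 2 / (E - Ω) ^ 2 * ρh w + 1) * v w ^ 2)
      = (∑ y : {a // a ∈ Λ}, (1 + g ^ 2 * ρ y.1 / (E - Ω) ^ 2) * v y ^ 2)
        + (g ^ 2 * ρhat - g ^ 2 * ρ x.1) / (E - Ω) ^ 2 * v x ^ 2 := by
    have hterm : ∀ w : {a // a ∈ Λ}, (g ^ 2 / (E - Ω) ^ 2 * ρh w + 1) * v w ^ 2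
        = (1 + g ^ 2 * ρ w.1 / (E - Ω) ^ 2) * v w ^ 2
          + (if w = x then (g ^ 2 * ρhat - g ^ 2 * ρ x.1) / (E - Ω) ^ 2 * v x ^ 2 else 0) := by
      intro w
      by_cases hw : w = x
      · subst hw; simp only [hρh, eq_self_iff_true, if_true]; ring
      · simp only [hρh, hw, if_false]; ring
    rw [Finset.sum_congr rfl fun w _ => hterm w, Finset.sum_add_distrib,
      Finset.sum_ite_eq' Finset.univ x
        (fun _ => (g ^ 2 * ρhat - g ^ 2 * ρ x.1) / (E - Ω) ^ 2 * v x ^ 2),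
      if_pos (Finset.mem_univ x)]
  clear_value A ρh M v c H W der φxx Γ
  refine ⟨?_, ?_⟩
  · rw [hΓder.deriv, hsum, hΓE, hder, hsplit]
    field_simp
    ring
  · rw [hsum, hΓE, hφxx, hnormW, one_div_div]
    field_simp

end
end
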